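/- Under the hypotheses that m is a σ-finite sub-invariant measure for a Markovian semigroup (P_t) (with P_t 1 = 1 m-a.e.), there exists a nonzero invariant probability measure for (P_t) absolutely continuous with respect to m if and only if there exists a nonzero ρ ∈ D(L_1) with L_1 ρ = 0. -/

import Mathlib

open MeasureTheory ProbabilityTheory Filter
open scoped NNReal ENNReal



set_option linter.unusedSectionVars false

namespace InvHarmAux

open MeasureTheory ProbabilityTheory Filter Set
open scoped ENNReal

variable {E : Type*} [MeasurableSpace E] {m : Measure E} [SigmaFinite m]
  {K : Kernel E E} [IsMarkovKernel K]

noncomputable def Pk (K : Kernel E E) (f : E → ℝ≥0∞) : E → ℝ≥0∞ := fun x => ∫⁻ y, f y ∂K x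

lemma measurable_Pk {f : E → ℝ≥0∞} (hf : Measurable f) : Measurable (Pk K f) :=
  Measurable.lintegral_kernel hf

lemma null_transfer (hs : ∀ f : E → ℝ≥0∞, Measurable f → ∫⁻ x, Pk K f x ∂m ≤ ∫⁻ x, f x ∂m)
    {N : Set E} (hN : m N = 0) : ∀ᵐ x ∂m, K x N = 0 := by
  obtain ⟨N', hNN', hN'm, hN'0⟩ := exists_measurable_superset_of_null hN
  have key : ∫⁻ x, K x N' ∂m = 0 := by
    have h1 : ∫⁻ x, K x N' ∂m = ∫⁻ x, Pk K (N'.indicator 1) x ∂m := by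
      simp [Pk, lintegral_indicator_one hN'm]
    have h2 : ∫⁻ x, N'.indicator (1 : E → ℝ≥0∞) x ∂m = 0 := by
      rw [lintegral_indicator_one hN'm, hN'0]
    refine le_antisymm ?_ zero_le
    rw [h1, ← h2]
    exact hs _ (measurable_one.indicator hN'm)
  have := (lintegral_eq_zero_iff (K.measurable_coe hN'm)).mp key
  filter_upwards [this] with x hx
  exact measure_mono_null hNN' hx

lemma eq_of_le_of_lintegral_le {u v : E → ℝ≥0∞} (hu : Measurable u) (hv : Measurable v)
    (hle : u ≤ᵐ[m] v) (hint : ∫⁻ x, v x ∂m ≤ ∫⁻ x, u x ∂m) (hfin : ∫⁻ x, u x ∂m ≠ ∞) :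
    u =ᵐ[m] v := by
  have h0 : ∫⁻ x, v x - u x ∂m = 0 := by
    rw [lintegral_sub hu hfin hle]
    exact tsub_eq_zero_of_le hint
  have := (lintegral_eq_zero_iff (hv.sub hu)).mp h0
  filter_upwards [this, hle] with x h1 h2
  exact le_antisymm h2 (tsub_eq_zero_iff_le.mp h1)

lemma min_one_eq_sub {a : ℝ≥0∞} (ha : a ≠ ∞) : min a 1 = a - (a - 1) := by
  rcases le_total a 1 with h | h
  · rw [min_eq_left h, tsub_eq_zero_of_le h, tsub_zero]
  · rw [min_eq_right h, ENNReal.sub_sub_cancel ha h]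

lemma sub_sub_le_min_one (a : ℝ≥0∞) : a - (a - 1) ≤ min a 1 := by
  rcases eq_or_ne a ∞ with rfl | ha
  · simp
  · exact (min_one_eq_sub ha).ge

/-- harmonicity passes to the truncation `min h 1`. -/
lemma trunc_harmonic (hs : ∀ f : E → ℝ≥0∞, Measurable f → ∫⁻ x, Pk K f x ∂m ≤ ∫⁻ x, f x ∂m)
    {h : E → ℝ≥0∞} (hhm : Measurable h) (hfin : ∫⁻ x, h x ∂m ≠ ∞)
    (hharm : Pk K h =ᵐ[m] h) :
    Pk K (fun x => min (h x) 1) =ᵐ[m] fun x => min (h x) 1 := by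
  set w : E → ℝ≥0∞ := fun x => h x - 1 with hw
  have hwm : Measurable w := hhm.sub measurable_const
  have hwfin : ∫⁻ x, w x ∂m ≠ ∞ :=
    fun hc => hfin (top_le_iff.mp (hc ▸ lintegral_mono (fun x => tsub_le_self)))
  have step1 : w ≤ᵐ[m] Pk K w := by
    filter_upwards [hharm] with x hx
    have h1 : (∫⁻ y, h y ∂K x) - ∫⁻ y, (1:ℝ≥0∞) ∂K x ≤ ∫⁻ y, h y - 1 ∂K x :=
      lintegral_sub_le _ _ measurable_const
    have h2 : ∫⁻ y, (1:ℝ≥0∞) ∂K x = 1 := by simp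
    calc w x = Pk K h x - 1 := by rw [hw]; simp only [hx]
    _ ≤ Pk K w x := by rw [← h2]; exact h1
  have step2 : w =ᵐ[m] Pk K w :=
    eq_of_le_of_lintegral_le hwm (measurable_Pk hwm) step1 (hs w hwm) hwfin
  set g : E → ℝ≥0∞ := fun x => min (h x) 1 with hg
  have hgm : Measurable g := hhm.min measurable_const
  have hgfin : ∫⁻ x, g x ∂m ≠ ∞ :=
    fun hc => hfin (top_le_iff.mp (hc ▸ lintegral_mono (fun x => min_le_left _ _)))
  have step3 : g ≤ᵐ[m] Pk K g := by
    filter_upwards [hharm, step2, ae_lt_top hhm hfin] with x hPh hPw hxlt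
    have p1 : ∀ y, h y - w y ≤ g y := fun y => sub_sub_le_min_one (h y)
    calc g x = h x - (h x - 1) := min_one_eq_sub hxlt.ne
    _ = Pk K h x - Pk K w x := by rw [hPh, ← hPw]
    _ ≤ ∫⁻ y, h y - w y ∂K x := lintegral_sub_le _ _ hwm
    _ ≤ Pk K g x := lintegral_mono p1
  exact (eq_of_le_of_lintegral_le hgm (measurable_Pk hgm) step3 (hs g hgm) hgfin).symm


noncomputable def nu (m : Measure E) (K : Kernel E E) (g : E → ℝ≥0∞) : Measure E :=
  (m.withDensity g).bind (fun x => K x)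

lemma nu_lintegral {g : E → ℝ≥0∞} (hg : Measurable g) {f : E → ℝ≥0∞} (hf : Measurable f) :
    ∫⁻ x, f x ∂(nu m K g) = ∫⁻ x, Pk K f x * g x ∂m := by
  calc ∫⁻ x, f x ∂(nu m K g) = ∫⁻ a, Pk K f a ∂(m.withDensity g) :=
        Measure.lintegral_bind K.measurable.aemeasurable hf.aemeasurable
    _ = ∫⁻ a, (g * Pk K f) a ∂m := lintegral_withDensity_eq_lintegral_mul m hg (measurable_Pk hf)
    _ = ∫⁻ x, Pk K f x * g x ∂m := lintegral_congr fun x => mul_comm _ _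

lemma nu_univ {g : E → ℝ≥0∞} (hg : Measurable g) : nu m K g univ = ∫⁻ x, g x ∂m := by
  rw [nu, Measure.bind_apply MeasurableSet.univ K.measurable.aemeasurable]
  simp only [measure_univ]
  rw [lintegral_one, withDensity_apply g MeasurableSet.univ, setLIntegral_univ]

lemma nu_apply_eq {g : E → ℝ≥0∞} (hg : Measurable g) {A : Set E} (hA : MeasurableSet A) :
    nu m K g A = ∫⁻ x, K x A * g x ∂m := by
  have h1 := nu_lintegral (m := m) (K := K) hg (measurable_one.indicator hA)
  rw [lintegral_indicator_one hA] at h1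
  rw [h1]
  refine lintegral_congr fun x => ?_
  congr 1
  simp [Pk, lintegral_indicator_one hA]

lemma nu_ac (hs : ∀ f : E → ℝ≥0∞, Measurable f → ∫⁻ x, Pk K f x ∂m ≤ ∫⁻ x, f x ∂m)
    {g : E → ℝ≥0∞} (hg : Measurable g) : nu m K g ≪ m := by
  refine Measure.AbsolutelyContinuous.mk fun A hA hA0 => ?_
  rw [nu_apply_eq hg hA]
  have h1 : ∀ᵐ x ∂m, K x A = 0 := null_transfer hs hA0
  rw [lintegral_congr_ae (g := 0) ?_]
  · simp
  · filter_upwards [h1] with x hx; simp [hx]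

lemma nu_finite {g : E → ℝ≥0∞} (hg : Measurable g) (hfin : ∫⁻ x, g x ∂m ≠ ∞) :
    IsFiniteMeasure (nu m K g) :=
  ⟨by rw [nu_univ hg]; exact lt_top_iff_ne_top.mpr hfin⟩

lemma nu_le (hs : ∀ f : E → ℝ≥0∞, Measurable f → ∫⁻ x, Pk K f x ∂m ≤ ∫⁻ x, f x ∂m)
    {g : E → ℝ≥0∞} (hg : Measurable g) (hb : ∀ x, g x ≤ 1) : nu m K g ≤ m := by
  rw [Measure.le_iff]
  intro A hA
  rw [nu_apply_eq hg hA]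
  have h2 : ∫⁻ x, K x A ∂m ≤ m A := by
    have := hs (A.indicator 1) (measurable_one.indicator hA)
    rw [lintegral_indicator_one hA] at this
    refine le_trans (le_of_eq ?_) this
    refine lintegral_congr fun x => ?_
    simp [Pk, lintegral_indicator_one hA]
  refine le_trans (lintegral_mono fun x => ?_) h2
  exact le_trans (mul_le_mul_right (hb x) _) (le_of_eq (mul_one _))

lemma nu_eq_withDensity (hs : ∀ f : E → ℝ≥0∞, Measurable f → ∫⁻ x, Pk K f x ∂m ≤ ∫⁻ x, f x ∂m)
    {g : E → ℝ≥0∞} (hg : Measurable g) (hfin : ∫⁻ x, g x ∂m ≠ ∞) :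
    m.withDensity ((nu m K g).rnDeriv m) = nu m K g := by
  have := nu_finite (m := m) (K := K) hg hfin
  exact Measure.withDensity_rnDeriv_eq _ _ (nu_ac hs hg)

lemma U_identity (hs : ∀ f : E → ℝ≥0∞, Measurable f → ∫⁻ x, Pk K f x ∂m ≤ ∫⁻ x, f x ∂m)
    {g : E → ℝ≥0∞} (hg : Measurable g) (hfin : ∫⁻ x, g x ∂m ≠ ∞)
    {f : E → ℝ≥0∞} (hf : Measurable f) :
    ∫⁻ x, f x * (nu m K g).rnDeriv m x ∂m = ∫⁻ x, Pk K f x * g x ∂m := by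
  calc ∫⁻ x, f x * (nu m K g).rnDeriv m x ∂m
      = ∫⁻ x, ((nu m K g).rnDeriv m * f) x ∂m := lintegral_congr fun x => mul_comm _ _
    _ = ∫⁻ x, f x ∂(m.withDensity ((nu m K g).rnDeriv m)) :=
        (lintegral_withDensity_eq_lintegral_mul m (Measure.measurable_rnDeriv _ _) hf).symm
    _ = ∫⁻ x, f x ∂(nu m K g) := by rw [nu_eq_withDensity hs hg hfin]
    _ = ∫⁻ x, Pk K f x * g x ∂m := nu_lintegral hg hf

lemma U_mass (hs : ∀ f : E → ℝ≥0∞, Measurable f → ∫⁻ x, Pk K f x ∂m ≤ ∫⁻ x, f x ∂m)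
    {g : E → ℝ≥0∞} (hg : Measurable g) (hfin : ∫⁻ x, g x ∂m ≠ ∞) :
    ∫⁻ x, (nu m K g).rnDeriv m x ∂m = ∫⁻ x, g x ∂m := by
  have := nu_finite (m := m) (K := K) hg hfin
  rw [Measure.lintegral_rnDeriv (nu_ac hs hg), nu_univ hg]

lemma U_le_one (hs : ∀ f : E → ℝ≥0∞, Measurable f → ∫⁻ x, Pk K f x ∂m ≤ ∫⁻ x, f x ∂m)
    {g : E → ℝ≥0∞} (hg : Measurable g) (hb : ∀ x, g x ≤ 1) :
    (nu m K g).rnDeriv m ≤ᵐ[m] 1 :=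
  Measure.rnDeriv_le_one_of_le (nu_le hs hg hb)

lemma nu_add {u v : E → ℝ≥0∞} (hu : Measurable u) :
    nu m K (u + v) = nu m K u + nu m K v := by
  refine Measure.ext fun A hA => ?_
  rw [nu, withDensity_add_left hu]
  rw [Measure.bind_apply hA K.measurable.aemeasurable, lintegral_add_measure, Measure.add_apply,
    ← Measure.bind_apply hA K.measurable.aemeasurable, ← Measure.bind_apply hA K.measurable.aemeasurable]
  rfl


lemma rpow_two_eq (a : ℝ≥0∞) : a ^ (2:ℝ) = a ^ (2:ℕ) := by
  rw [← ENNReal.rpow_natCast a 2]; norm_num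

lemma holder2 (ν : Measure E) {f g : E → ℝ≥0∞} (hf : AEMeasurable f ν) (hg : AEMeasurable g ν) :
    ∫⁻ x, f x * g x ∂ν ≤ (∫⁻ x, f x ^ 2 ∂ν) ^ (1/2:ℝ) * (∫⁻ x, g x ^ 2 ∂ν) ^ (1/2:ℝ) := by
  have hpq : Real.HolderConjugate 2 2 := Real.HolderConjugate.two_two
  have h := ENNReal.lintegral_mul_le_Lp_mul_Lq ν hpq hf hg
  simp only [Pi.mul_apply, rpow_two_eq] at h
  exact h

lemma sq_le_of_le_sqrt {a b : ℝ≥0∞} (h : a ≤ b ^ (1/2:ℝ)) : a ^ 2 ≤ b := by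
  have h2 : a ^ (2:ℝ) ≤ (b ^ (1/2:ℝ)) ^ (2:ℝ) := ENNReal.rpow_le_rpow h (by norm_num)
  rw [← ENNReal.rpow_mul] at h2
  norm_num at h2
  exact_mod_cast h2

lemma sq_lintegral_le {ν : Measure E} [IsProbabilityMeasure ν] {f : E → ℝ≥0∞}
    (hf : AEMeasurable f ν) : (∫⁻ x, f x ∂ν) ^ 2 ≤ ∫⁻ x, f x ^ 2 ∂ν := by
  have h := holder2 ν hf aemeasurable_const (g := fun _ => (1:ℝ≥0∞))
  simp only [mul_one, one_pow, lintegral_one, measure_univ, ENNReal.one_rpow] at h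
  exact sq_le_of_le_sqrt h

lemma le_of_le_sqrt_mul_sqrt {a b : ℝ≥0∞} (hafin : a ≠ ∞)
    (h : a ≤ a ^ (1/2:ℝ) * b ^ (1/2:ℝ)) : a ≤ b := by
  rcases eq_or_ne a 0 with rfl | ha0
  · exact zero_le
  have hh0 : a ^ (1/2:ℝ) ≠ 0 := by
    simp [ENNReal.rpow_eq_zero_iff, ha0, hafin]
  have hht : a ^ (1/2:ℝ) ≠ ∞ := by
    simp [ENNReal.rpow_eq_top_iff, ha0, hafin]
  have ha : a = a ^ (1/2:ℝ) * a ^ (1/2:ℝ) := by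
    rw [← ENNReal.rpow_add _ _ ha0 hafin]; norm_num
  have h' : a ^ (1/2:ℝ) * a ^ (1/2:ℝ) ≤ a ^ (1/2:ℝ) * b ^ (1/2:ℝ) := ha.symm.trans_le h
  have h2 : a ^ (1/2:ℝ) ≤ b ^ (1/2:ℝ) := (ENNReal.mul_le_mul_iff_right hh0 hht).mp h' 
  have := sq_le_of_le_sqrt h2
  calc a = a ^ (1/2:ℝ) * a ^ (1/2:ℝ) := ha
  _ = (a ^ (1/2:ℝ)) ^ 2 := (sq _).symm
  _ ≤ b := this

/-- the real L² computation -/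
lemma ae_eq_of_L2 {φ g : E → ℝ≥0∞} (hφ : Measurable φ) (hg : Measurable g)
    (hφfin : ∀ᵐ x ∂m, φ x < ∞) (hgfin : ∀ᵐ x ∂m, g x < ∞)
    (hsq : ∫⁻ x, φ x ^ 2 ∂m ≤ ∫⁻ x, g x ^ 2 ∂m)
    (hcross : ∫⁻ x, φ x * g x ∂m = ∫⁻ x, g x ^ 2 ∂m)
    (hg2fin : ∫⁻ x, g x ^ 2 ∂m ≠ ∞) : φ =ᵐ[m] g := by
  have hφ2fin : ∫⁻ x, φ x ^ 2 ∂m ≠ ∞ := fun hc => hg2fin (top_le_iff.mp (hc ▸ hsq))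
  have hcrossfin : ∫⁻ x, φ x * g x ∂m ≠ ∞ := hcross ▸ hg2fin
  set Φ : E → ℝ := fun x => (φ x).toReal with hΦ
  set G : E → ℝ := fun x => (g x).toReal with hG
  have eφ2 : (fun x => ((φ x ^ 2 : ℝ≥0∞)).toReal) = fun x => Φ x ^ 2 :=
    funext fun x => ENNReal.toReal_pow _ _
  have eg2 : (fun x => ((g x ^ 2 : ℝ≥0∞)).toReal) = fun x => G x ^ 2 :=
    funext fun x => ENNReal.toReal_pow _ _
  have ecr : (fun x => ((φ x * g x : ℝ≥0∞)).toReal) = fun x => Φ x * G x :=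
    funext fun x => ENNReal.toReal_mul
  have IΦ2 : Integrable (fun x => Φ x ^ 2) m := by
    rw [← eφ2]
    exact integrable_toReal_of_lintegral_ne_top (hφ.pow_const 2).aemeasurable hφ2fin
  have IG2 : Integrable (fun x => G x ^ 2) m := by
    rw [← eg2]
    exact integrable_toReal_of_lintegral_ne_top (hg.pow_const 2).aemeasurable hg2fin
  have Icr : Integrable (fun x => Φ x * G x) m := by
    rw [← ecr]
    exact integrable_toReal_of_lintegral_ne_top (hφ.mul hg).aemeasurable hcrossfin
  have iΦ2 : ∫ x, Φ x ^ 2 ∂m = (∫⁻ x, φ x ^ 2 ∂m).toReal := by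
    rw [← eφ2]
    exact integral_toReal (hφ.pow_const 2).aemeasurable (ae_lt_top (hφ.pow_const 2) hφ2fin)
  have iG2 : ∫ x, G x ^ 2 ∂m = (∫⁻ x, g x ^ 2 ∂m).toReal := by
    rw [← eg2]
    exact integral_toReal (hg.pow_const 2).aemeasurable (ae_lt_top (hg.pow_const 2) hg2fin)
  have icr : ∫ x, Φ x * G x ∂m = (∫⁻ x, φ x * g x ∂m).toReal := by
    rw [← ecr]
    exact integral_toReal (hφ.mul hg).aemeasurable (ae_lt_top (hφ.mul hg) hcrossfin)
  have expand : (fun x => (Φ x - G x) ^ 2) =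
      fun x => Φ x ^ 2 - 2 * (Φ x * G x) + G x ^ 2 := funext fun x => by ring
  have I1 : Integrable (fun x => Φ x ^ 2 - 2 * (Φ x * G x)) m := IΦ2.sub (Icr.const_mul 2)
  have Isq : Integrable (fun x => (Φ x - G x) ^ 2) m := by
    rw [expand]
    exact I1.add IG2
  have key : ∫ x, (Φ x - G x) ^ 2 ∂m ≤ 0 := by
    rw [expand, integral_add I1 IG2,
      integral_sub IΦ2 (Icr.const_mul 2), integral_const_mul 2 _, iΦ2, iG2, icr, hcross]
    have hle : (∫⁻ x, φ x ^ 2 ∂m).toReal ≤ (∫⁻ x, g x ^ 2 ∂m).toReal :=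
      ENNReal.toReal_mono hg2fin hsq
    linarith
  have hzero : ∫ x, (Φ x - G x) ^ 2 ∂m = 0 :=
    le_antisymm key (integral_nonneg fun x => sq_nonneg _)
  have haez : (fun x => (Φ x - G x) ^ 2) =ᵐ[m] 0 :=
    (integral_eq_zero_iff_of_nonneg (fun x => sq_nonneg _) Isq).mp hzero
  filter_upwards [haez, hφfin, hgfin] with x h1 h2 h3
  have : Φ x = G x := by
    have h1' : (Φ x - G x) ^ 2 = 0 := h1
    have := sub_eq_zero.mp ((pow_eq_zero_iff two_ne_zero).mp h1')
    linarith [this]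
  exact (ENNReal.toReal_eq_toReal_iff' h2.ne h3.ne).mp this



lemma Pk_le_one {g : E → ℝ≥0∞} (hb : ∀ x, g x ≤ 1) (x : E) : Pk K g x ≤ 1 := by
  calc Pk K g x ≤ ∫⁻ _, 1 ∂K x := lintegral_mono hb
  _ = 1 := by simp

lemma lintegral_Pk_sq_le (hs : ∀ f : E → ℝ≥0∞, Measurable f → ∫⁻ x, Pk K f x ∂m ≤ ∫⁻ x, f x ∂m)
    {f : E → ℝ≥0∞} (hf : Measurable f) :
    ∫⁻ x, Pk K f x ^ 2 ∂m ≤ ∫⁻ x, f x ^ 2 ∂m := by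
  have h1 : ∀ x, Pk K f x ^ 2 ≤ Pk K (fun y => f y ^ 2) x := fun x =>
    sq_lintegral_le hf.aemeasurable
  exact le_trans (lintegral_mono h1) (hs _ (hf.pow_const 2))

lemma sq_lint_fin {g : E → ℝ≥0∞} (hb : ∀ x, g x ≤ 1) (hfin : ∫⁻ x, g x ∂m ≠ ∞) :
    ∫⁻ x, g x ^ 2 ∂m ≠ ∞ := by
  refine ne_top_of_le_ne_top hfin (lintegral_mono fun x => ?_)
  calc g x ^ 2 = g x * g x := sq _
  _ ≤ g x * 1 := mul_le_mul_right (hb x) _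
  _ = g x := mul_one _

lemma coharm_to_harm (hs : ∀ f : E → ℝ≥0∞, Measurable f → ∫⁻ x, Pk K f x ∂m ≤ ∫⁻ x, f x ∂m)
    {g : E → ℝ≥0∞} (hgm : Measurable g) (hb : ∀ x, g x ≤ 1) (hfin : ∫⁻ x, g x ∂m ≠ ∞)
    (hco : (nu m K g).rnDeriv m =ᵐ[m] g) : Pk K g =ᵐ[m] g := by
  have hg2fin : ∫⁻ x, g x ^ 2 ∂m ≠ ∞ := sq_lint_fin hb hfin
  have hcross : ∫⁻ x, Pk K g x * g x ∂m = ∫⁻ x, g x ^ 2 ∂m := by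
    rw [← U_identity hs hgm hfin hgm]
    refine lintegral_congr_ae ?_
    filter_upwards [hco] with x hx
    rw [hx, sq]
  refine ae_eq_of_L2 (measurable_Pk hgm) hgm ?_ ?_ (lintegral_Pk_sq_le hs hgm) hcross hg2fin
  · exact ae_of_all _ fun x => lt_of_le_of_lt (Pk_le_one hb x) ENNReal.one_lt_top
  · exact ae_of_all _ fun x => lt_of_le_of_lt (hb x) ENNReal.one_lt_top

lemma harm_to_coharm (hs : ∀ f : E → ℝ≥0∞, Measurable f → ∫⁻ x, Pk K f x ∂m ≤ ∫⁻ x, f x ∂m)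
    {g : E → ℝ≥0∞} (hgm : Measurable g) (hb : ∀ x, g x ≤ 1) (hfin : ∫⁻ x, g x ∂m ≠ ∞)
    (hharm : Pk K g =ᵐ[m] g) : (nu m K g).rnDeriv m =ᵐ[m] g := by
  set u := (nu m K g).rnDeriv m with hu
  have hum : Measurable u := Measure.measurable_rnDeriv _ _
  have hu1 : u ≤ᵐ[m] 1 := U_le_one hs hgm hb
  have hg2fin : ∫⁻ x, g x ^ 2 ∂m ≠ ∞ := sq_lint_fin hb hfin
  have hufin : ∀ᵐ x ∂m, u x < ∞ := by
    filter_upwards [hu1] with x hx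
    exact lt_of_le_of_lt hx ENNReal.one_lt_top
  have humass : ∫⁻ x, u x ∂m = ∫⁻ x, g x ∂m := U_mass hs hgm hfin
  have hu2le : ∫⁻ x, u x ^ 2 ∂m ≤ ∫⁻ x, u x ∂m := by
    refine lintegral_mono_ae ?_
    filter_upwards [hu1] with x hx
    calc u x ^ 2 = u x * u x := sq _
    _ ≤ u x * 1 := mul_le_mul_right hx _
    _ = u x := mul_one _
  have hu2fin : ∫⁻ x, u x ^ 2 ∂m ≠ ∞ := ne_top_of_le_ne_top (humass ▸ hfin) hu2le
  have hcross : ∫⁻ x, u x * g x ∂m = ∫⁻ x, g x ^ 2 ∂m := by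
    have h1 : ∫⁻ x, g x * u x ∂m = ∫⁻ x, Pk K g x * g x ∂m := U_identity hs hgm hfin hgm
    have h2 : ∫⁻ x, Pk K g x * g x ∂m = ∫⁻ x, g x ^ 2 ∂m := by
      refine lintegral_congr_ae ?_
      filter_upwards [hharm] with x hx
      rw [hx, sq]
    rw [← h2, ← h1]
    exact lintegral_congr fun x => mul_comm _ _
  have hsq : ∫⁻ x, u x ^ 2 ∂m ≤ ∫⁻ x, g x ^ 2 ∂m := by
    have e1 : ∫⁻ x, u x * u x ∂m = ∫⁻ x, Pk K u x * g x ∂m := U_identity hs hgm hfin hum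
    have e2 : ∫⁻ x, Pk K u x * g x ∂m ≤
        (∫⁻ x, Pk K u x ^ 2 ∂m) ^ (1/2:ℝ) * (∫⁻ x, g x ^ 2 ∂m) ^ (1/2:ℝ) :=
      holder2 m (measurable_Pk hum).aemeasurable hgm.aemeasurable
    have e3 : (∫⁻ x, Pk K u x ^ 2 ∂m) ^ (1/2:ℝ) ≤ (∫⁻ x, u x ^ 2 ∂m) ^ (1/2:ℝ) :=
      ENNReal.rpow_le_rpow (lintegral_Pk_sq_le hs hum) (by norm_num)
    have e4 : ∫⁻ x, u x ^ 2 ∂m ≤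
        (∫⁻ x, u x ^ 2 ∂m) ^ (1/2:ℝ) * (∫⁻ x, g x ^ 2 ∂m) ^ (1/2:ℝ) := by
      calc ∫⁻ x, u x ^ 2 ∂m = ∫⁻ x, u x * u x ∂m := lintegral_congr fun x => sq _
      _ ≤ _ := le_trans (e1.trans_le e2) (mul_le_mul_left e3 _)
    exact le_of_le_sqrt_mul_sqrt hu2fin e4
  refine ae_eq_of_L2 hum hgm hufin ?_ hsq hcross hg2fin
  exact ae_of_all _ fun x => lt_of_le_of_lt (hb x) ENNReal.one_lt_top

lemma ae_transfer (hs : ∀ f : E → ℝ≥0∞, Measurable f → ∫⁻ x, Pk K f x ∂m ≤ ∫⁻ x, f x ∂m)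
    {α : Type*} {u v : E → α} (huv : u =ᵐ[m] v) : ∀ᵐ x ∂m, u =ᵐ[K x] v := by
  have hN : m {y | u y ≠ v y} = 0 := huv
  filter_upwards [null_transfer hs hN] with x hx
  exact hx

lemma sub_add_min_one (a : ℝ≥0∞) : (a - 1) + min a 1 = a := by
  rcases le_total a 1 with h | h
  · rw [tsub_eq_zero_of_le h, zero_add, min_eq_left h]
  · rw [min_eq_right h, tsub_add_cancel_of_le h]

lemma eq_zero_of_min_one {a : ℝ≥0∞} (h : min a 1 = 0) : a = 0 := by
  rcases le_total a 1 with h' | h'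
  · rwa [min_eq_left h'] at h
  · rw [min_eq_right h'] at h; exact absurd h one_ne_zero

lemma ofReal_harmonic (hs : ∀ f : E → ℝ≥0∞, Measurable f → ∫⁻ x, Pk K f x ∂m ≤ ∫⁻ x, f x ∂m)
    {r : E → ℝ} (hrs : StronglyMeasurable r) (hri : Integrable r m)
    (hharm : (fun x => ∫ y, r y ∂K x) =ᵐ[m] r) :
    Pk K (fun x => ENNReal.ofReal (r x)) =ᵐ[m] fun x => ENNReal.ofReal (r x) := by
  have hrm : Measurable r := hrs.measurable
  have hmeas : Measurable fun x => ENNReal.ofReal (r x) := ENNReal.measurable_ofReal.comp hrm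
  have hnn : Measurable fun y => (‖r y‖₊ : ℝ≥0∞) := hrm.nnnorm.coe_nnreal_ennreal
  have hnfin : ∫⁻ x, (‖r x‖₊ : ℝ≥0∞) ∂m ≠ ∞ := hri.2.ne
  have hptle : ∀ x, ENNReal.ofReal (r x) ≤ (‖r x‖₊ : ℝ≥0∞) := fun x => by
    refine le_of_le_of_eq ?_ (ofReal_norm (r x))
    exact ENNReal.ofReal_le_ofReal (le_trans (le_abs_self _) (Real.norm_eq_abs _).ge)
  have hfin : ∫⁻ x, ENNReal.ofReal (r x) ∂m ≠ ∞ :=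
    ne_top_of_le_ne_top hnfin (lintegral_mono hptle)
  have hintk : ∀ᵐ x ∂m, Integrable r (K x) := by
    have h1 : ∫⁻ x, Pk K (fun y => (‖r y‖₊ : ℝ≥0∞)) x ∂m ≠ ∞ :=
      ne_top_of_le_ne_top hnfin (hs _ hnn)
    filter_upwards [ae_lt_top (measurable_Pk hnn) h1] with x hx
    exact ⟨hrs.aestronglyMeasurable, hx⟩
  have hge : (fun x => ENNReal.ofReal (r x)) ≤ᵐ[m] Pk K (fun x => ENNReal.ofReal (r x)) := by
    filter_upwards [hharm, hintk] with x h1 h2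
    have hpos : Integrable (fun y => max (r y) 0) (K x) := h2.pos_part
    calc ENNReal.ofReal (r x) = ENNReal.ofReal (∫ y, r y ∂K x) := by rw [h1]
    _ ≤ ENNReal.ofReal (∫ y, max (r y) 0 ∂K x) :=
      ENNReal.ofReal_le_ofReal (integral_mono h2 hpos fun y => le_max_left _ _)
    _ = ∫⁻ y, ENNReal.ofReal (max (r y) 0) ∂K x :=
      ofReal_integral_eq_lintegral_ofReal hpos (ae_of_all _ fun y => le_max_right _ _)
    _ = Pk K (fun y => ENNReal.ofReal (r y)) x := by
      refine lintegral_congr fun y => ?_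
      rcases le_total (r y) 0 with h | h
      · rw [max_eq_right h, ENNReal.ofReal_zero, ENNReal.ofReal_of_nonpos h]
      · rw [max_eq_left h]
  exact (eq_of_le_of_lintegral_le hmeas (measurable_Pk hmeas) hge (hs _ hmeas) hfin).symm

end InvHarmAux

namespace InvHarmAuxF

open Filter Set Topology

variable {X : Type*} [NormedAddCommGroup X] [NormedSpace ℝ X] [CompleteSpace X]

lemma local_bound {S : ℝ → X →L[ℝ] X}
    (hSsc : ∀ g : X, Tendsto (fun t => S t g) (nhdsWithin 0 (Set.Ici (0:ℝ))) (nhds g)) :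
    ∃ δ : ℝ, 0 < δ ∧ ∃ M : ℝ, 1 ≤ M ∧ ∀ s, 0 ≤ s → s ≤ δ → ‖S s‖ ≤ M := by
  by_contra hcon
  push_neg at hcon
  have hseq : ∀ n : ℕ, ∃ s : ℝ, 0 ≤ s ∧ s ≤ 1/((n:ℝ)+1) ∧ (n:ℝ) + 1 < ‖S s‖ := by
    intro n
    obtain ⟨s, hs0, hsle, hgt⟩ := hcon (1/((n:ℝ)+1)) (by positivity) ((n:ℝ)+1)
      (by exact_mod_cast le_add_of_nonneg_left (Nat.cast_nonneg n))
    exact ⟨s, hs0, hsle, hgt⟩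
  choose s hs0 hsle hsgt using hseq
  have hstend : Tendsto s atTop (nhdsWithin 0 (Set.Ici (0:ℝ))) := by
    rw [tendsto_nhdsWithin_iff]
    constructor
    · exact squeeze_zero hs0 hsle (tendsto_one_div_add_atTop_nhds_zero_nat)
    · exact Eventually.of_forall hs0
  have hpt : ∀ x : X, ∃ C, ∀ n, ‖S (s n) x‖ ≤ C := by
    intro x
    have h1 : Tendsto (fun n => ‖S (s n) x‖) atTop (nhds ‖x‖) := ((hSsc x).comp hstend).norm
    obtain ⟨C, hC⟩ := h1.bddAbove_range
    exact ⟨C, fun n => hC ⟨n, rfl⟩⟩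
  obtain ⟨C', hC'⟩ := banach_steinhaus hpt
  obtain ⟨n, hn⟩ := exists_nat_gt C'
  exact absurd (hC' n) (not_le.mpr (lt_trans (lt_of_lt_of_le hn (by linarith)) (hsgt n)))

lemma growth_bound {S : ℝ → X →L[ℝ] X}
    (hS0 : S 0 = ContinuousLinearMap.id ℝ X)
    (hSsemi : ∀ s ≥ (0:ℝ), ∀ t ≥ (0:ℝ), S (s + t) = (S s).comp (S t))
    {δ M : ℝ} (hδ : 0 < δ) (hM : 1 ≤ M) (hloc : ∀ s, 0 ≤ s → s ≤ δ → ‖S s‖ ≤ M) :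
    ∀ k : ℕ, ∀ s, 0 ≤ s → s ≤ δ * k → ∀ x : X, ‖S s x‖ ≤ M ^ (k+1) * ‖x‖ := by
  intro k
  induction k with
  | zero =>
    intro u hu0 hule x
    have : u = 0 := le_antisymm (by simpa using hule) hu0
    subst this
    rw [hS0]
    simpa using le_mul_of_one_le_left (norm_nonneg x) (by simpa using hM)
  | succ k ih =>
    intro u hu0 hule x
    rcases le_or_gt u δ with hcase | hcase
    · have h1 : ‖S u x‖ ≤ M * ‖x‖ :=
        le_trans ((S u).le_opNorm x) (mul_le_mul_of_nonneg_right (hloc u hu0 hcase) (norm_nonneg x))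
      refine le_trans h1 (mul_le_mul_of_nonneg_right ?_ (norm_nonneg x))
      calc M = M ^ 1 := (pow_one M).symm
      _ ≤ M ^ (k+2) := pow_le_pow_right₀ hM (by omega)
    · have hsub0 : (0:ℝ) ≤ u - δ := by linarith
      have hsuble : u - δ ≤ δ * k := by
        have : δ * (k+1 : ℕ) = δ * k + δ := by push_cast; ring
        linarith [hule.trans_eq this]
      have hdecomp : S u = (S (u - δ)).comp (S δ) := by
        have := hSsemi (u - δ) hsub0 δ hδ.le
        rwa [sub_add_cancel] at this
      have h2 : ‖S u x‖ = ‖S (u - δ) (S δ x)‖ := by rw [hdecomp]; rfl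
      rw [h2]
      refine le_trans (ih (u - δ) hsub0 hsuble (S δ x)) ?_
      have h3 : ‖S δ x‖ ≤ M * ‖x‖ :=
        le_trans ((S δ).le_opNorm x) (mul_le_mul_of_nonneg_right (hloc δ hδ.le le_rfl)
          (norm_nonneg x))
      calc M ^ (k+1) * ‖S δ x‖ ≤ M ^ (k+1) * (M * ‖x‖) :=
        mul_le_mul_of_nonneg_left h3 (pow_nonneg (by linarith) _)
      _ = M ^ (k+2) * ‖x‖ := by ring

lemma continuousOn_S {S : ℝ → X →L[ℝ] X}
    (hS0 : S 0 = ContinuousLinearMap.id ℝ X)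
    (hSsemi : ∀ s ≥ (0:ℝ), ∀ t ≥ (0:ℝ), S (s + t) = (S s).comp (S t))
    (hSsc : ∀ g : X, Tendsto (fun t => S t g) (nhdsWithin 0 (Set.Ici (0:ℝ))) (nhds g))
    (x : X) {b : ℝ} (hb : 0 ≤ b) : ContinuousOn (fun u => S u x) (Icc 0 b) := by
  obtain ⟨δ, hδ, M, hM, hloc⟩ := local_bound hSsc
  set k : ℕ := ⌈b / δ⌉₊ with hk
  have hbk : b ≤ δ * k := by
    have h1 : b / δ ≤ (k : ℝ) := Nat.le_ceil _
    calc b = δ * (b / δ) := by field_simp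
    _ ≤ δ * k := mul_le_mul_of_nonneg_left h1 hδ.le
  set C : ℝ := M ^ (k+1) with hC
  have hCbound : ∀ u, 0 ≤ u → u ≤ b → ∀ y : X, ‖S u y‖ ≤ C * ‖y‖ := fun u h1 h2 y =>
    growth_bound hS0 hSsemi hδ hM hloc k u h1 (h2.trans hbk) y
  intro u hu
  have huIcc : 0 ≤ u ∧ u ≤ b := hu
  -- right continuity within Ici u
  have cwaR : ContinuousWithinAt (fun v => S v x) (Ici u) u := by
    unfold ContinuousWithinAt
    have inner : Tendsto (fun v => S (v - u) x) (nhdsWithin u (Ici u)) (nhds x) := by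
      refine (hSsc x).comp ?_
      rw [tendsto_nhdsWithin_iff]
      refine ⟨?_, eventually_mem_nhdsWithin.mono fun v hv => Set.mem_Ici.mpr (sub_nonneg.mpr hv)⟩
      have h0 : Tendsto (fun v : ℝ => v - u) (nhds u) (nhds (u - u)) :=
        (continuous_sub_right u).tendsto u
      rw [sub_self] at h0
      exact h0.mono_left nhdsWithin_le_nhds
    have key : ∀ᶠ v in nhdsWithin u (Ici u), S u (S (v - u) x) = S v x := by
      refine eventually_mem_nhdsWithin.mono fun v hv => ?_
      have := hSsemi u huIcc.1 (v - u) (sub_nonneg.mpr hv)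
      rw [add_sub_cancel] at this
      rw [this]; rfl
    exact Tendsto.congr' key (((S u).continuous.tendsto x).comp inner)
  -- left continuity within Icc 0 u
  have cwaL : ContinuousWithinAt (fun v => S v x) (Icc 0 u) u := by
    unfold ContinuousWithinAt
    have inner : Tendsto (fun v => S (u - v) x) (nhdsWithin u (Icc 0 u)) (nhds x) := by
      refine (hSsc x).comp ?_
      rw [tendsto_nhdsWithin_iff]
      refine ⟨?_, eventually_mem_nhdsWithin.mono fun v hv => sub_nonneg.mpr hv.2⟩
      have h0 : Tendsto (fun v : ℝ => u - v) (nhds u) (nhds (u - u)) :=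
        (continuous_sub_left u).tendsto u
      rw [sub_self] at h0
      exact h0.mono_left nhdsWithin_le_nhds
    have hdiff : Tendsto (fun v => S v x - S u x) (nhdsWithin u (Icc 0 u)) (nhds 0) := by
      refine squeeze_zero_norm' (a := fun v => C * ‖x - S (u - v) x‖) ?_ ?_
      · refine eventually_mem_nhdsWithin.mono fun v hv => ?_
        have hdec : S u x = S v (S (u - v) x) := by
          have := hSsemi v hv.1 (u - v) (sub_nonneg.mpr hv.2)
          rw [add_sub_cancel] at this
          rw [this]; rfl
        have : S v x - S u x = S v (x - S (u - v) x) := by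
          rw [hdec, ← map_sub]
        rw [this]
        exact hCbound v hv.1 (hv.2.trans huIcc.2) _
      · have h1 : Tendsto (fun v => x - S (u - v) x) (nhdsWithin u (Icc 0 u)) (nhds 0) := by
          have := (tendsto_const_nhds (x := x) (f := nhdsWithin u (Icc 0 u))).sub inner
          simpa using this
        have := (h1.norm).const_mul C
        simpa using this
    have := hdiff.add (tendsto_const_nhds (x := S u x))
    simpa using this
  exact (cwaL.union cwaR).mono fun v hv => by
    rcases le_total v u with h | h
    · exact Or.inl ⟨hv.1, h⟩
    · exact Or.inr h

lemma semigroup_fixed {S : ℝ → X →L[ℝ] X}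
    (hS0 : S 0 = ContinuousLinearMap.id ℝ X)
    (hSsemi : ∀ s ≥ (0:ℝ), ∀ t ≥ (0:ℝ), S (s + t) = (S s).comp (S t))
    (hSsc : ∀ g : X, Tendsto (fun t => S t g) (nhdsWithin 0 (Set.Ici (0:ℝ))) (nhds g))
    {ρ : X}
    (hgen : Tendsto (fun t : ℝ => t⁻¹ • (S t ρ - ρ)) (nhdsWithin 0 (Set.Ioi (0:ℝ))) (nhds 0))
    {t : ℝ} (ht : 0 ≤ t) : S t ρ = ρ := by
  have hcont : ContinuousOn (fun u => S u ρ) (Icc 0 t) := continuousOn_S hS0 hSsemi hSsc ρ ht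
  have hderiv : ∀ u ∈ Ico 0 t, HasDerivWithinAt (fun v => S v ρ) 0 (Ici u) u := by
    intro u hu
    rw [hasDerivWithinAt_iff_tendsto_slope]
    rw [show Ici u \ {u} = Ioi u from Set.ext fun v => by
      simp only [mem_diff, mem_Ici, mem_singleton_iff, mem_Ioi]
      exact ⟨fun h => lt_of_le_of_ne h.1 (Ne.symm h.2), fun h => ⟨h.le, h.ne'⟩⟩]
    have inner : Tendsto (fun v => (v - u)⁻¹ • (S (v - u) ρ - ρ))
        (nhdsWithin u (Ioi u)) (nhds 0) := by
      refine hgen.comp ?_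
      rw [tendsto_nhdsWithin_iff]
      refine ⟨?_, eventually_mem_nhdsWithin.mono fun v hv => Set.mem_Ioi.mpr (sub_pos.mpr hv)⟩
      have h0 : Tendsto (fun v : ℝ => v - u) (nhds u) (nhds (u - u)) :=
        (continuous_sub_right u).tendsto u
      rw [sub_self] at h0
      exact h0.mono_left nhdsWithin_le_nhds
    have key : ∀ᶠ v in nhdsWithin u (Ioi u),
        S u ((v - u)⁻¹ • (S (v - u) ρ - ρ)) = slope (fun w => S w ρ) u v := by
      refine eventually_mem_nhdsWithin.mono fun v hv => ?_
      have hcomp := hSsemi u hu.1 (v - u) (le_of_lt (sub_pos.mpr hv))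
      rw [add_sub_cancel] at hcomp
      rw [slope]
      simp only [vsub_eq_sub]
      rw [_root_.map_smul, map_sub, hcomp]
      rfl
    have := Tendsto.congr' key (((S u).continuous.tendsto _).comp inner)
    rw [map_zero] at this
    exact this
  have := constant_of_has_deriv_right_zero hcont hderiv t (right_mem_Icc.mpr ht)
  rw [hS0] at this
  exact this

end InvHarmAuxF


/-- Let `m` be a σ-finite sub-invariant measure for a Markovian semigroup
`(P_t)` (Markov kernels `κ t`), extended to a strongly continuous semigroup `(S_t)` on
`L¹(E,m)` with generator `L₁`. There exists an invariant probability measure for `(P_t)`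
absolutely continuous w.r.t. `m` iff there exists a nonzero `ρ ∈ D(L₁)` with `L₁ ρ = 0`,
i.e. `t⁻¹(S_t ρ − ρ) → 0` strongly as `t → 0⁺`. -/
theorem invariant_probability_iff_harmonic
    {E : Type*} [MeasurableSpace E] (m : Measure E) [SigmaFinite m]
    (κ : ℝ → Kernel E E) [∀ t, IsMarkovKernel (κ t)]
    (hκ0 : κ 0 = Kernel.id)
    (hκsemi : ∀ s ≥ (0:ℝ), ∀ t ≥ (0:ℝ), κ (s + t) = (κ s).comp (κ t))
    (hsub : ∀ t ≥ (0:ℝ), ∀ f : E → ℝ≥0∞, Measurable f →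
      ∫⁻ x, ∫⁻ y, f y ∂(κ t x) ∂m ≤ ∫⁻ x, f x ∂m)
    (S : ℝ → (Lp ℝ 1 m →L[ℝ] Lp ℝ 1 m))
    (hS0 : S 0 = ContinuousLinearMap.id ℝ (Lp ℝ 1 m))
    (hSsemi : ∀ s ≥ (0:ℝ), ∀ t ≥ (0:ℝ), S (s + t) = (S s).comp (S t))
    (hSsc : ∀ g : Lp ℝ 1 m,
      Tendsto (fun t => S t g) (nhdsWithin 0 (Set.Ici (0:ℝ))) (nhds g))
    (hext : ∀ t ≥ (0:ℝ), ∀ g : Lp ℝ 1 m,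
      (S t g : E → ℝ) =ᵐ[m] fun x => ∫ y, g y ∂(κ t x)) :
    (∃ μ : Measure E, IsProbabilityMeasure μ ∧ μ ≪ m ∧
        ∀ t > (0:ℝ), ∀ f : E → ℝ≥0∞, Measurable f →
          ∫⁻ x, ∫⁻ y, f y ∂(κ t x) ∂μ = ∫⁻ x, f x ∂μ) ↔
      (∃ ρ : Lp ℝ 1 m, ρ ≠ 0 ∧
        Tendsto (fun t : ℝ => t⁻¹ • (S t ρ - ρ)) (nhdsWithin 0 (Set.Ioi (0:ℝ)))
          (nhds 0)) := by
  classical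
  constructor
  · rintro ⟨μ, hprob, hac, hinv⟩
    set h : E → ℝ≥0∞ := μ.rnDeriv m with hh
    have hhm : Measurable h := Measure.measurable_rnDeriv μ m
    have hwd : m.withDensity h = μ := Measure.withDensity_rnDeriv_eq μ m hac
    have hmass : ∫⁻ x, h x ∂m = 1 := by
      rw [Measure.lintegral_rnDeriv hac]; exact measure_univ
    have hlt : ∀ᵐ x ∂m, h x < ∞ := Measure.rnDeriv_lt_top μ m
    set g : E → ℝ≥0∞ := fun x => min (h x) 1 with hgdef
    have hgm : Measurable g := hhm.min measurable_const
    have hble : ∀ x, g x ≤ 1 := fun x => min_le_right _ _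
    have hgfin : ∫⁻ x, g x ∂m ≠ ∞ :=
      ne_top_of_le_ne_top (hmass ▸ ENNReal.one_ne_top)
        (lintegral_mono fun x => min_le_left _ _)
    have hgne : ¬ g =ᵐ[m] 0 := by
      intro hc
      have hh0 : h =ᵐ[m] 0 := by
        filter_upwards [hc] with x hx
        exact InvHarmAux.eq_zero_of_min_one hx
      rw [lintegral_congr_ae hh0] at hmass
      simp at hmass
    have hfix : ∀ t : ℝ, 0 < t → InvHarmAux.Pk (κ t) g =ᵐ[m] g := by
      intro t ht
      have hs : ∀ f : E → ℝ≥0∞, Measurable f →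
          ∫⁻ x, InvHarmAux.Pk (κ t) f x ∂m ≤ ∫⁻ x, f x ∂m := fun f hf => hsub t ht.le f hf
      set w : E → ℝ≥0∞ := fun x => h x - 1 with hwdef
      have hwm : Measurable w := hhm.sub measurable_const
      have hwfin : ∫⁻ x, w x ∂m ≠ ∞ :=
        ne_top_of_le_ne_top (hmass ▸ ENNReal.one_ne_top)
          (lintegral_mono fun x => tsub_le_self)
      have hbind : InvHarmAux.nu m (κ t) h = μ := by
        refine Measure.ext fun A hA => ?_
        rw [InvHarmAux.nu_apply_eq hhm hA]
        have h1 := hinv t ht (A.indicator 1) (measurable_one.indicator hA)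
        rw [lintegral_indicator_one hA] at h1
        calc ∫⁻ x, κ t x A * h x ∂m = ∫⁻ x, κ t x A ∂μ := by
              rw [← hwd, lintegral_withDensity_eq_lintegral_mul m hhm ((κ t).measurable_coe hA)]
              exact lintegral_congr fun x => mul_comm _ _
          _ = μ A := by
              rw [← h1]
              exact lintegral_congr fun x => by rw [lintegral_indicator_one hA]
      have hUh : (InvHarmAux.nu m (κ t) h).rnDeriv m =ᵐ[m] h := by
        rw [hbind, ← hwd]
        exact Measure.rnDeriv_withDensity m hhm
      haveI hfinw : IsFiniteMeasure (InvHarmAux.nu m (κ t) w) := InvHarmAux.nu_finite hwm hwfin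
      haveI hfing : IsFiniteMeasure (InvHarmAux.nu m (κ t) g) := InvHarmAux.nu_finite hgm hgfin
      have hnuadd : InvHarmAux.nu m (κ t) h =
          InvHarmAux.nu m (κ t) w + InvHarmAux.nu m (κ t) g := by
        have hdecomp : w + g = h := funext fun x => InvHarmAux.sub_add_min_one (h x)
        rw [← InvHarmAux.nu_add hwm, hdecomp]
      have hUadd : (InvHarmAux.nu m (κ t) h).rnDeriv m =ᵐ[m]
          (InvHarmAux.nu m (κ t) w).rnDeriv m + (InvHarmAux.nu m (κ t) g).rnDeriv m := by
        rw [hnuadd]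
        exact Measure.rnDeriv_add _ _ _
      have hUg1 : (InvHarmAux.nu m (κ t) g).rnDeriv m ≤ᵐ[m] 1 :=
        InvHarmAux.U_le_one hs hgm hble
      have hUwge : w ≤ᵐ[m] (InvHarmAux.nu m (κ t) w).rnDeriv m := by
        filter_upwards [hUh, hUadd, hUg1] with x h1 h2 h3
        have he : h x = (InvHarmAux.nu m (κ t) w).rnDeriv m x +
            (InvHarmAux.nu m (κ t) g).rnDeriv m x := by rw [← h1, h2]; rfl
        have hle : h x ≤ (InvHarmAux.nu m (κ t) w).rnDeriv m x + 1 :=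
          he.le.trans (add_le_add le_rfl h3)
        exact tsub_le_iff_right.mpr hle
      have hUw : w =ᵐ[m] (InvHarmAux.nu m (κ t) w).rnDeriv m :=
        InvHarmAux.eq_of_le_of_lintegral_le hwm (Measure.measurable_rnDeriv _ _) hUwge
          (le_of_eq (InvHarmAux.U_mass hs hwm hwfin)) hwfin
      have hUg : (InvHarmAux.nu m (κ t) g).rnDeriv m =ᵐ[m] g := by
        filter_upwards [hUh, hUadd, hUw, hlt] with x h1 h2 h3 h4
        have he : h x = w x + (InvHarmAux.nu m (κ t) g).rnDeriv m x := by
          rw [← h1, h2]; simp only [Pi.add_apply]; rw [← h3]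
        have hwlt : w x ≠ ∞ := ne_top_of_le_ne_top h4.ne tsub_le_self
        have hcancel : (InvHarmAux.nu m (κ t) g).rnDeriv m x = h x - w x := by
          rw [he, ENNReal.add_sub_cancel_left hwlt]
        rw [hcancel]
        exact (InvHarmAux.min_one_eq_sub h4.ne).symm
      exact InvHarmAux.coharm_to_harm hs hgm hble hgfin hUg
    set G : E → ℝ := fun x => (g x).toReal with hGdef
    have hGint : Integrable G m := integrable_toReal_of_lintegral_ne_top hgm.aemeasurable hgfin
    have hGmem : MemLp G 1 m := memLp_one_iff_integrable.mpr hGint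
    refine ⟨hGmem.toLp G, ?_, ?_⟩
    · intro hc
      apply hgne
      have h0 : (hGmem.toLp G : E → ℝ) =ᵐ[m] 0 := by
        rw [hc]; exact Lp.coeFn_zero _ _ _
      have hG0 : G =ᵐ[m] 0 := (hGmem.coeFn_toLp).symm.trans h0
      filter_upwards [hG0] with x hx
      have hfinx : g x ≠ ∞ := ne_top_of_le_ne_top ENNReal.one_ne_top (hble x)
      have hx' : (g x).toReal = 0 := hx
      rcases (ENNReal.toReal_eq_zero_iff _).mp hx' with h' | h'
      · exact h'
      · exact absurd h' hfinx
    · have hfixLp : ∀ t : ℝ, 0 < t → S t (hGmem.toLp G) = hGmem.toLp G := by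
        intro t ht
        have hs : ∀ f : E → ℝ≥0∞, Measurable f →
            ∫⁻ x, InvHarmAux.Pk (κ t) f x ∂m ≤ ∫⁻ x, f x ∂m := fun f hf => hsub t ht.le f hf
        refine Lp.ext ?_
        have h1 := hext t ht.le (hGmem.toLp G)
        have h2 : ∀ᵐ x ∂m, (hGmem.toLp G : E → ℝ) =ᵐ[κ t x] G :=
          InvHarmAux.ae_transfer hs hGmem.coeFn_toLp
        have h3 : ∀ᵐ x ∂m, (∫ y, (hGmem.toLp G : E → ℝ) y ∂κ t x) = G x := by
          filter_upwards [h2, hfix t ht] with x hx1 hx2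
          rw [integral_congr_ae hx1]
          have hIT : ∫ y, G y ∂κ t x = (∫⁻ y, g y ∂κ t x).toReal :=
            integral_toReal hgm.aemeasurable
              (ae_of_all _ fun y => lt_of_le_of_lt (hble y) ENNReal.one_lt_top)
          rw [hIT]
          exact congrArg ENNReal.toReal hx2
        calc (S t (hGmem.toLp G) : E → ℝ)
            =ᵐ[m] fun x => ∫ y, (hGmem.toLp G : E → ℝ) y ∂κ t x := h1
          _ =ᵐ[m] G := h3
          _ =ᵐ[m] hGmem.toLp G := hGmem.coeFn_toLp.symm
      have hev : (fun _ : ℝ => (0 : Lp ℝ 1 m)) =ᶠ[nhdsWithin 0 (Set.Ioi (0:ℝ))]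
          (fun t : ℝ => t⁻¹ • (S t (hGmem.toLp G) - hGmem.toLp G)) := by
        refine eventually_mem_nhdsWithin.mono fun t ht => ?_
        show (0 : Lp ℝ 1 m) = t⁻¹ • (S t (hGmem.toLp G) - hGmem.toLp G)
        rw [hfixLp t ht, sub_self, smul_zero]
      exact Tendsto.congr' hev tendsto_const_nhds
  · rintro ⟨ρ, hρne, hgen⟩
    have hfixLp : ∀ t : ℝ, 0 ≤ t → S t ρ = ρ := fun t ht =>
      InvHarmAuxF.semigroup_fixed hS0 hSsemi hSsc hgen ht
    set r : E → ℝ := (Lp.aestronglyMeasurable ρ).mk ρ with hrdef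
    have hrs : StronglyMeasurable r := (Lp.aestronglyMeasurable ρ).stronglyMeasurable_mk
    have hrae : (ρ : E → ℝ) =ᵐ[m] r := (Lp.aestronglyMeasurable ρ).ae_eq_mk
    have hrint : Integrable r m := (L1.integrable_coeFn ρ).congr hrae
    have hrharm : ∀ t : ℝ, 0 < t → (fun x => ∫ y, r y ∂κ t x) =ᵐ[m] r := by
      intro t ht
      have hs : ∀ f : E → ℝ≥0∞, Measurable f →
          ∫⁻ x, InvHarmAux.Pk (κ t) f x ∂m ≤ ∫⁻ x, f x ∂m := fun f hf => hsub t ht.le f hf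
      have h1 := hext t ht.le ρ
      rw [hfixLp t ht.le] at h1
      have h2 : (fun x => ∫ y, (ρ : E → ℝ) y ∂κ t x) =ᵐ[m] fun x => ∫ y, r y ∂κ t x := by
        filter_upwards [InvHarmAux.ae_transfer hs hrae] with x hx
        exact integral_congr_ae hx
      calc (fun x => ∫ y, r y ∂κ t x)
          =ᵐ[m] (fun x => ∫ y, (ρ : E → ℝ) y ∂κ t x) := h2.symm
        _ =ᵐ[m] (ρ : E → ℝ) := h1.symm
        _ =ᵐ[m] r := hrae
    have hnotboth : ¬ ((fun x => ENNReal.ofReal (r x)) =ᵐ[m] 0 ∧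
        (fun x => ENNReal.ofReal (- r x)) =ᵐ[m] 0) := by
      rintro ⟨hp, hm'⟩
      apply hρne
      have hr0 : r =ᵐ[m] 0 := by
        filter_upwards [hp, hm'] with x h1 h2
        have l1 : r x ≤ 0 := ENNReal.ofReal_eq_zero.mp h1
        have l2 : - r x ≤ 0 := ENNReal.ofReal_eq_zero.mp h2
        have : r x = 0 := by linarith
        exact this
      refine Lp.ext ?_
      calc (ρ : E → ℝ) =ᵐ[m] r := hrae
        _ =ᵐ[m] 0 := hr0
        _ =ᵐ[m] (0 : Lp ℝ 1 m) := (Lp.coeFn_zero _ _ _).symm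
    obtain ⟨h0, hh0m, hh0fin, hh0harm, hh0ne⟩ :
        ∃ h0 : E → ℝ≥0∞, Measurable h0 ∧ (∫⁻ x, h0 x ∂m ≠ ∞) ∧
          (∀ t : ℝ, 0 < t → InvHarmAux.Pk (κ t) h0 =ᵐ[m] h0) ∧ ¬ h0 =ᵐ[m] 0 := by
      by_cases hcase : (fun x => ENNReal.ofReal (r x)) =ᵐ[m] 0
      · refine ⟨fun x => ENNReal.ofReal (- r x),
          ENNReal.measurable_ofReal.comp hrs.measurable.neg, ?_, ?_, ?_⟩
        · refine ne_top_of_le_ne_top hrint.2.ne (lintegral_mono fun x => ?_)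
          refine le_of_le_of_eq ?_ (ofReal_norm (r x))
          exact ENNReal.ofReal_le_ofReal ((neg_le_abs _).trans (Real.norm_eq_abs _).ge)
        · intro t ht
          have hs : ∀ f : E → ℝ≥0∞, Measurable f →
              ∫⁻ x, InvHarmAux.Pk (κ t) f x ∂m ≤ ∫⁻ x, f x ∂m := fun f hf => hsub t ht.le f hf
          refine InvHarmAux.ofReal_harmonic hs hrs.neg hrint.neg ?_
          filter_upwards [hrharm t ht] with x hx
          rw [integral_neg, hx]
        · intro hc
          exact hnotboth ⟨hcase, hc⟩
      · refine ⟨fun x => ENNReal.ofReal (r x),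
          ENNReal.measurable_ofReal.comp hrs.measurable, ?_, ?_, hcase⟩
        · refine ne_top_of_le_ne_top hrint.2.ne (lintegral_mono fun x => ?_)
          refine le_of_le_of_eq ?_ (ofReal_norm (r x))
          exact ENNReal.ofReal_le_ofReal ((le_abs_self _).trans (Real.norm_eq_abs _).ge)
        · intro t ht
          have hs : ∀ f : E → ℝ≥0∞, Measurable f →
              ∫⁻ x, InvHarmAux.Pk (κ t) f x ∂m ≤ ∫⁻ x, f x ∂m := fun f hf => hsub t ht.le f hf
          exact InvHarmAux.ofReal_harmonic hs hrs hrint (hrharm t ht)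
    set g : E → ℝ≥0∞ := fun x => min (h0 x) 1 with hgdef
    have hgm : Measurable g := hh0m.min measurable_const
    have hble : ∀ x, g x ≤ 1 := fun x => min_le_right _ _
    have hgfin : ∫⁻ x, g x ∂m ≠ ∞ :=
      ne_top_of_le_ne_top hh0fin (lintegral_mono fun x => min_le_left _ _)
    have hgne : ¬ g =ᵐ[m] 0 := fun hc => hh0ne (by
      filter_upwards [hc] with x hx
      exact InvHarmAux.eq_zero_of_min_one hx)
    set Z : ℝ≥0∞ := ∫⁻ x, g x ∂m with hZ
    have hZ0 : Z ≠ 0 := fun hc => hgne ((lintegral_eq_zero_iff hgm).mp hc)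
    refine ⟨(Z⁻¹) • m.withDensity g, ?_, ?_, ?_⟩
    · constructor
      rw [Measure.smul_apply, smul_eq_mul, withDensity_apply g MeasurableSet.univ,
        setLIntegral_univ]
      exact ENNReal.inv_mul_cancel hZ0 hgfin
    · refine Measure.AbsolutelyContinuous.mk fun A hA hA0 => ?_
      rw [Measure.smul_apply, withDensity_apply g hA, setLIntegral_measure_zero _ _ hA0]
      simp
    · intro t ht f hf
      have hs : ∀ f : E → ℝ≥0∞, Measurable f →
          ∫⁻ x, InvHarmAux.Pk (κ t) f x ∂m ≤ ∫⁻ x, f x ∂m := fun f hf => hsub t ht.le f hf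
      have hharm : InvHarmAux.Pk (κ t) g =ᵐ[m] g :=
        InvHarmAux.trunc_harmonic hs hh0m hh0fin (hh0harm t ht)
      have hco := InvHarmAux.harm_to_coharm hs hgm hble hgfin hharm
      have hid := InvHarmAux.U_identity hs hgm hgfin hf
      have hkey : ∫⁻ x, InvHarmAux.Pk (κ t) f x * g x ∂m = ∫⁻ x, f x * g x ∂m := by
        rw [← hid]
        refine lintegral_congr_ae ?_
        filter_upwards [hco] with x hx
        rw [hx]
      rw [lintegral_smul_measure, lintegral_smul_measure]
      congr 1
      calc ∫⁻ x, ∫⁻ y, f y ∂κ t x ∂(m.withDensity g)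
          = ∫⁻ x, (g * InvHarmAux.Pk (κ t) f) x ∂m :=
            lintegral_withDensity_eq_lintegral_mul m hgm (InvHarmAux.measurable_Pk hf)
        _ = ∫⁻ x, f x * g x ∂m := by
            rw [← hkey]; exact lintegral_congr fun x => mul_comm _ _
        _ = ∫⁻ x, (g * f) x ∂m := lintegral_congr fun x => mul_comm _ _
        _ = ∫⁻ x, f x ∂(m.withDensity g) := (lintegral_withDensity_eq_lintegral_mul m hgm hf).symm
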